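/- Let α ∈ (0,1) and Q ≥ 0 with Q < (1−α)/α, and define a = (1 − √(α(1+Q)))²/(1−α) and b = (1 + √(α(1+Q)))²/(1−α). Then 0 ≤ a < b and a, b solve the Regime IA end-point equations: (√(b+Q) − √(a+Q)) / (√b + √a) = √α, and ( √((b+Q)(a+Q)) + √(ab) − Q ) / 2 = 1. -/

import Mathlib

set_option maxHeartbeats 1000000


/-- for `0 < α < 1` and `0 ≤ Q < (1−α)/α`, the explicit end-points
`a = (1 − √(α(1+Q)))²/(1−α)`, `b = (1 + √(α(1+Q)))²/(1−α)` satisfy `0 ≤ a < b`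
and the Regime IA end-point equations
`(√(b+Q) − √(a+Q))/(√b + √a) = √α` and `(√((b+Q)(a+Q)) + √(ab) − Q)/2 = 1`. -/
theorem regime_IA_endpoints (α Q : ℝ) (hα0 : 0 < α) (hα1 : α < 1)
    (hQ0 : 0 ≤ Q) (hQ : Q < (1 - α) / α) :
    0 ≤ (1 - Real.sqrt (α * (1 + Q))) ^ 2 / (1 - α) ∧
    (1 - Real.sqrt (α * (1 + Q))) ^ 2 / (1 - α)
      < (1 + Real.sqrt (α * (1 + Q))) ^ 2 / (1 - α) ∧
    (Real.sqrt ((1 + Real.sqrt (α * (1 + Q))) ^ 2 / (1 - α) + Q)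
        - Real.sqrt ((1 - Real.sqrt (α * (1 + Q))) ^ 2 / (1 - α) + Q)) /
      (Real.sqrt ((1 + Real.sqrt (α * (1 + Q))) ^ 2 / (1 - α))
        + Real.sqrt ((1 - Real.sqrt (α * (1 + Q))) ^ 2 / (1 - α)))
      = Real.sqrt α ∧
    (Real.sqrt (((1 + Real.sqrt (α * (1 + Q))) ^ 2 / (1 - α) + Q) *
          ((1 - Real.sqrt (α * (1 + Q))) ^ 2 / (1 - α) + Q))
        + Real.sqrt ((1 - Real.sqrt (α * (1 + Q))) ^ 2 / (1 - α) *
          ((1 + Real.sqrt (α * (1 + Q))) ^ 2 / (1 - α)))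
        - Q) / 2 = 1 := by
  have h1a : 0 < 1 - α := by linarith
  set t := Real.sqrt α with ht
  set u := Real.sqrt (1 + Q) with hu
  set v := Real.sqrt (1 - α) with hv
  have ht2 : t ^ 2 = α := Real.sq_sqrt hα0.le
  have hu2 : u ^ 2 = 1 + Q := Real.sq_sqrt (by linarith)
  have hv2 : v ^ 2 = 1 - α := Real.sq_sqrt h1a.le
  have hs : Real.sqrt (α * (1 + Q)) = t * u := Real.sqrt_mul hα0.le _
  have htpos : 0 < t := Real.sqrt_pos.2 hα0
  have hvpos : 0 < v := Real.sqrt_pos.2 h1a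
  have hu1 : 1 ≤ u := by
    rw [show (1 : ℝ) = Real.sqrt 1 by simp, hu]
    exact Real.sqrt_le_sqrt (by linarith)
  have hαQ : α * (1 + Q) < 1 := by
    have h := (lt_div_iff₀ hα0).1 hQ
    nlinarith
  have htu1 : t * u < 1 := by
    nlinarith [ht2, hu2, mul_nonneg htpos.le (by linarith : (0:ℝ) ≤ u)]
  have htu0 : 0 < t * u := mul_pos htpos (by linarith)
  have htlt : t < u := by nlinarith [ht2, hu2]
  rw [hs]
  -- simplify all square roots
  have hsq : ∀ c : ℝ, 0 ≤ c → Real.sqrt (c ^ 2 / (1 - α)) = c / v := by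
    intro c hc
    rw [← hv2, Real.sqrt_div (sq_nonneg c), Real.sqrt_sq hc, Real.sqrt_sq hvpos.le]
  have hA : Real.sqrt ((1 - t * u) ^ 2 / (1 - α)) = (1 - t * u) / v :=
    hsq _ (by linarith)
  have hB : Real.sqrt ((1 + t * u) ^ 2 / (1 - α)) = (1 + t * u) / v :=
    hsq _ (by linarith)
  have keyA : (1 - t * u) ^ 2 / (1 - α) + Q = (u - t) ^ 2 / (1 - α) := by
    rw [div_add' _ _ _ h1a.ne', div_eq_div_iff h1a.ne' h1a.ne']
    linear_combination (1 - α) * ((u ^ 2 - 1) * ht2 - (1 - α) * hu2)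
  have keyB : (1 + t * u) ^ 2 / (1 - α) + Q = (u + t) ^ 2 / (1 - α) := by
    rw [div_add' _ _ _ h1a.ne', div_eq_div_iff h1a.ne' h1a.ne']
    linear_combination (1 - α) * ((u ^ 2 - 1) * ht2 - (1 - α) * hu2)
  have hAQ : Real.sqrt ((1 - t * u) ^ 2 / (1 - α) + Q) = (u - t) / v := by
    rw [keyA]; exact hsq _ (by linarith)
  have hBQ : Real.sqrt ((1 + t * u) ^ 2 / (1 - α) + Q) = (u + t) / v := by
    rw [keyB]; exact hsq _ (by linarith)
  have hd1 : (0:ℝ) ≤ 1 - t ^ 2 * u ^ 2 := by nlinarith [htu1, htu0]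
  have hd2 : (0:ℝ) ≤ u ^ 2 - t ^ 2 := by nlinarith [htlt, htpos]
  have hABprod : (1 - t * u) ^ 2 / (1 - α) * ((1 + t * u) ^ 2 / (1 - α))
      = ((1 - t ^ 2 * u ^ 2) / (1 - α)) ^ 2 := by
    field_simp; ring
  have hAB : Real.sqrt ((1 - t * u) ^ 2 / (1 - α) * ((1 + t * u) ^ 2 / (1 - α)))
      = (1 - t ^ 2 * u ^ 2) / (1 - α) := by
    rw [hABprod, Real.sqrt_sq (div_nonneg hd1 h1a.le)]
  have hQprod : ((1 + t * u) ^ 2 / (1 - α) + Q) * ((1 - t * u) ^ 2 / (1 - α) + Q)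
      = ((u ^ 2 - t ^ 2) / (1 - α)) ^ 2 := by
    rw [keyA, keyB]; field_simp; ring
  have hPQ : Real.sqrt (((1 + t * u) ^ 2 / (1 - α) + Q) * ((1 - t * u) ^ 2 / (1 - α) + Q))
      = (u ^ 2 - t ^ 2) / (1 - α) := by
    rw [hQprod, Real.sqrt_sq (div_nonneg hd2 h1a.le)]
  refine ⟨by positivity, ?_, ?_, ?_⟩
  · exact (div_lt_div_iff_of_pos_right h1a).2 (by nlinarith)
  · rw [hA, hB, hAQ, hBQ]
    field_simp
    ring
  · rw [hAB, hPQ]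
    rw [← add_div]
    field_simp
    linear_combination (-2 - Q) * ht2 + (1 - t ^ 2) * hu2
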